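/- For every integer T ≥ 2 and every real δ such that sin((δ+π)/(2T)) ≠ 0 and sin((δ−π)/(2T)) ≠ 0, the amplitude α_T(δ) admits the closed form α_T(δ) = −(√2 / T) · exp(i (δ/2)(1 − 1/T)) · sin(π/(2T)) · cos(δ/(2T)) · cos(δ/2) / ( sin((δ+π)/(2T)) · sin((δ−π)/(2T)) ). -/

import Mathlib

open Complex in
lemma exp_sub_one' (r : ℝ) : Complex.exp (Complex.I * r) - 1
    = Complex.exp (Complex.I * r / 2) * (2 * Complex.I * (Real.sin (r/2) : ℂ)) := by
  have hc : ((r/2 : ℝ) : ℂ) = (r : ℂ)/2 := by push_cast; ring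
  rw [Complex.ofReal_sin, hc, Complex.sin]
  have h1 : Complex.exp (Complex.I * r / 2) * Complex.exp (-((r:ℂ)/2) * Complex.I) = 1 := by
    rw [← Complex.exp_add, show Complex.I * (r:ℂ) / 2 + -((r:ℂ)/2) * Complex.I = 0 by ring,
      Complex.exp_zero]
  have h2 : Complex.exp (Complex.I * r / 2) * Complex.exp (((r:ℂ)/2) * Complex.I)
      = Complex.exp (Complex.I * r) := by
    rw [← Complex.exp_add]; ring_nf
  linear_combination h1 - h2 + (Complex.exp (Complex.I * r / 2) *
    (Complex.exp (((r:ℂ)/2) * Complex.I) - Complex.exp (-((r:ℂ)/2) * Complex.I))) * Complex.I_mul_I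

open Complex in
lemma exp_add_one' (r : ℝ) : Complex.exp (Complex.I * r) + 1
    = Complex.exp (Complex.I * r / 2) * (2 * (Real.cos (r/2) : ℂ)) := by
  have hc : ((r/2 : ℝ) : ℂ) = (r : ℂ)/2 := by push_cast; ring
  rw [Complex.ofReal_cos, hc, Complex.cos]
  have h1 : Complex.exp (Complex.I * r / 2) * Complex.exp (-((r:ℂ)/2) * Complex.I) = 1 := by
    rw [← Complex.exp_add, show Complex.I * (r:ℂ) / 2 + -((r:ℂ)/2) * Complex.I = 0 by ring,
      Complex.exp_zero]
  have h2 : Complex.exp (Complex.I * r / 2) * Complex.exp (((r:ℂ)/2) * Complex.I)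
      = Complex.exp (Complex.I * r) := by
    rw [← Complex.exp_add]; ring_nf
  linear_combination -h1 - h2

lemma alg' {K : Type*} [Field K] (i e f f' g c sp sm cd sn s t : K)
    (hi : i*i = -1) (hi0 : i ≠ 0) (h2 : (2:K) ≠ 0) (he : e ≠ 0) (hf : f ≠ 0) (hf' : f' ≠ 0)
    (hsp : sp ≠ 0) (hsm : sm ≠ 0)
    (hrel : sp - sm = 2*cd*sn) :
    (s/t) * ((f * ((-(g*e*(2*c))) / (e*f*(2*i*sp))) - f' * ((-(g*e*(2*c))) / (e*f'*(2*i*sm)))) / (2*i))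
      = -(s/t) * g * sn * cd * c / (sp*sm) := by
  rw [show -(g*e*(2*c)) = -(2*g*e*c) by ring, show e*f*(2*i*sp) = e*f*(2*i)*sp by ring,
    show e*f'*(2*i*sm) = e*f'*(2*i)*sm by ring]
  have t1 : f * ((-(2*g*e*c)) / (e*f*(2*i)*sp)) = -(g*c) / (i*sp) := by
    rw [← mul_div_assoc,
      div_eq_div_iff (by simp [he, hf, hi0, hsp, h2] : e*f*(2*i)*sp ≠ 0)
        (by simp [hi0, hsp] : i*sp ≠ 0)]
    ring
  have t2 : f' * ((-(2*g*e*c)) / (e*f'*(2*i)*sm)) = -(g*c) / (i*sm) := by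
    rw [← mul_div_assoc,
      div_eq_div_iff (by simp [he, hf', hi0, hsm, h2] : e*f'*(2*i)*sm ≠ 0)
        (by simp [hi0, hsm] : i*sm ≠ 0)]
    ring
  rw [t1, t2]
  have t3 : (-(g*c) / (i*sp) - -(g*c) / (i*sm)) / (2*i)
      = g*c*(sp - sm) / ((i*i)*(2*sp*sm)) := by
    rw [div_sub_div _ _ (by simp [hi0, hsp] : i*sp ≠ 0) (by simp [hi0, hsm] : i*sm ≠ 0),
      div_div,
      div_eq_div_iff (by simp [hi0, hsp, hsm, h2] : i*sp*(i*sm)*(2*i) ≠ 0)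
        (by simp [hi0, hsp, hsm, h2] : (i*i)*(2*sp*sm) ≠ 0)]
    ring
  rw [t3, hi, hrel]
  rw [← mul_div_assoc,
    div_eq_div_iff (by simp [hsp, hsm, h2] : (-1:K)*(2*sp*sm) ≠ 0) (by simp [hsp, hsm] : sp*sm ≠ 0)]
  ring

/-- The post-QPE amplitude function `α_T(δ) = (√2/T) ∑_{τ=0}^{T-1} sin(π(τ+1/2)/T) e^{iδτ/T}`. -/
noncomputable def amp (T : ℕ) (δ : ℝ) : ℂ :=
  (Real.sqrt 2 / T) * ∑ τ ∈ Finset.range T,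
    (Real.sin (Real.pi * (τ + 1 / 2) / T) : ℂ) * Complex.exp (Complex.I * δ * τ / T)

theorem stmt_0 (T : ℕ) (hT : 2 ≤ T) (δ : ℝ)
    (h1 : Real.sin ((δ + Real.pi) / (2 * T)) ≠ 0)
    (h2 : Real.sin ((δ - Real.pi) / (2 * T)) ≠ 0) :
    amp T δ =
      -(Real.sqrt 2 / T : ℂ) * Complex.exp (Complex.I * (δ / 2) * (1 - 1 / T)) *
        (Real.sin (Real.pi / (2 * T)) : ℂ) * (Real.cos (δ / (2 * T)) : ℂ) *
        (Real.cos (δ / 2) : ℂ) /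
        ((Real.sin ((δ + Real.pi) / (2 * T)) : ℂ) *
          (Real.sin ((δ - Real.pi) / (2 * T)) : ℂ)) := by
  have hT0 : (T:ℝ) ≠ 0 := Nat.cast_ne_zero.mpr (by omega)
  have hTc : (T:ℂ) ≠ 0 := Nat.cast_ne_zero.mpr (by omega)
  set p : ℝ := (δ + Real.pi)/T with hp
  set m : ℝ := (δ - Real.pi)/T with hm
  have hp2 : p/2 = (δ + Real.pi)/(2*T) := by rw [hp, div_div, mul_comm]
  have hm2 : m/2 = (δ - Real.pi)/(2*T) := by rw [hm, div_div, mul_comm]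
  have hsp : Real.sin (p/2) ≠ 0 := by rw [hp2]; exact h1
  have hsm : Real.sin (m/2) ≠ 0 := by rw [hm2]; exact h2
  have hx1 : Complex.exp (Complex.I * p) ≠ 1 := by
    intro h
    have h0 := exp_sub_one' p
    rw [h, sub_self] at h0
    rcases mul_eq_zero.mp h0.symm with h' | h'
    · exact Complex.exp_ne_zero _ h'
    · rcases mul_eq_zero.mp h' with h'' | h''
      · simp [Complex.I_ne_zero] at h''
      · exact hsp (by exact_mod_cast h'')
  have hy1 : Complex.exp (Complex.I * m) ≠ 1 := by
    intro h
    have h0 := exp_sub_one' m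
    rw [h, sub_self] at h0
    rcases mul_eq_zero.mp h0.symm with h' | h'
    · exact Complex.exp_ne_zero _ h'
    · rcases mul_eq_zero.mp h' with h'' | h''
      · simp [Complex.I_ne_zero] at h''
      · exact hsm (by exact_mod_cast h'')
  have geomp : ∑ τ ∈ Finset.range T, (Complex.exp (Complex.I * p))^τ
      = (-Complex.exp (Complex.I * δ) - 1) / (Complex.exp (Complex.I * p) - 1) := by
    rw [geom_sum_eq hx1]
    congr 1
    rw [← Complex.exp_nat_mul,
      show (T:ℂ) * (Complex.I * (p:ℝ)) = Complex.I * δ + Real.pi * Complex.I by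
        rw [hp]; push_cast; field_simp,
      Complex.exp_add, Complex.exp_pi_mul_I]
    ring
  have geomm : ∑ τ ∈ Finset.range T, (Complex.exp (Complex.I * m))^τ
      = (-Complex.exp (Complex.I * δ) - 1) / (Complex.exp (Complex.I * m) - 1) := by
    rw [geom_sum_eq hy1]
    congr 1
    rw [← Complex.exp_nat_mul,
      show (T:ℂ) * (Complex.I * (m:ℝ)) = Complex.I * δ + (-(Real.pi * Complex.I)) by
        rw [hm]; push_cast; field_simp; ring,
      Complex.exp_add, Complex.exp_neg, Complex.exp_pi_mul_I]
    field_simp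
  have hsum : ∀ τ ∈ Finset.range T,
      (Real.sin (Real.pi * (τ + 1/2)/T) : ℂ) * Complex.exp (Complex.I * δ * τ / T)
      = (Complex.exp (Complex.I * Real.pi/(2*T)) * (Complex.exp (Complex.I * p))^τ
         - Complex.exp (-(Complex.I * Real.pi/(2*T))) * (Complex.exp (Complex.I * m))^τ)
        / (2*Complex.I) := by
    intro τ _
    rw [Complex.ofReal_sin,
      show ((Real.pi * (τ + 1/2)/T : ℝ) : ℂ) = (Real.pi : ℂ) * ((τ:ℂ) + 1/2)/(T:ℂ) by
        push_cast; ring,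
      Complex.sin, ← Complex.exp_nat_mul, ← Complex.exp_nat_mul]
    have eA : Complex.exp (-((Real.pi:ℂ) * ((τ:ℂ) + 1/2)/(T:ℂ)) * Complex.I)
          * Complex.exp (Complex.I * δ * τ / T)
        = Complex.exp (-(Complex.I * Real.pi/(2*T))) * Complex.exp ((τ:ℂ) * (Complex.I * (m:ℝ))) := by
      rw [← Complex.exp_add, ← Complex.exp_add]
      congr 1
      rw [hm]; push_cast; field_simp; ring
    have eB : Complex.exp (((Real.pi:ℂ) * ((τ:ℂ) + 1/2)/(T:ℂ)) * Complex.I)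
          * Complex.exp (Complex.I * δ * τ / T)
        = Complex.exp (Complex.I * Real.pi/(2*T)) * Complex.exp ((τ:ℂ) * (Complex.I * (p:ℝ))) := by
      rw [← Complex.exp_add, ← Complex.exp_add]
      congr 1
      rw [hp]; push_cast; field_simp; ring
    rw [eq_div_iff (mul_ne_zero two_ne_zero Complex.I_ne_zero)]
    linear_combination (Complex.I * Complex.I) * eA - (Complex.I * Complex.I) * eB
      + (Complex.exp (-(Complex.I * (Real.pi:ℂ)/(2*(T:ℂ)))) * Complex.exp ((τ:ℂ) * (Complex.I * (m:ℝ)))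
        - Complex.exp (Complex.I * (Real.pi:ℂ)/(2*(T:ℂ))) * Complex.exp ((τ:ℂ) * (Complex.I * (p:ℝ)))) * Complex.I_mul_I
  rw [amp, Finset.sum_congr rfl hsum, ← Finset.sum_div, Finset.sum_sub_distrib,
    ← Finset.mul_sum, ← Finset.mul_sum, geomp, geomm, exp_sub_one' p, exp_sub_one' m]
  rw [hp2, hm2]
  have hsplit_p : Complex.exp (Complex.I * (p:ℝ) / 2)
      = Complex.exp (Complex.I * δ/(2*(T:ℂ))) * Complex.exp (Complex.I * Real.pi/(2*(T:ℂ))) := by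
    rw [← Complex.exp_add]; congr 1; rw [hp]; push_cast; field_simp
  have hsplit_m : Complex.exp (Complex.I * (m:ℝ) / 2)
      = Complex.exp (Complex.I * δ/(2*(T:ℂ))) * Complex.exp (-(Complex.I * Real.pi/(2*(T:ℂ)))) := by
    rw [← Complex.exp_add]; congr 1; rw [hm]; push_cast; field_simp; ring
  have hge : Complex.exp (Complex.I * (δ:ℂ) / 2)
      = Complex.exp (Complex.I * ((δ:ℂ)/2) * (1 - 1/(T:ℂ))) * Complex.exp (Complex.I * δ/(2*(T:ℂ))) := by
    rw [← Complex.exp_add]; congr 1; field_simp; ring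
  have hnum : -Complex.exp (Complex.I * (δ:ℂ)) - 1
      = -(Complex.exp (Complex.I * ((δ:ℂ)/2) * (1 - 1/(T:ℂ)))
          * Complex.exp (Complex.I * δ/(2*(T:ℂ))) * (2 * (Real.cos (δ/2) : ℂ))) := by
    have h := exp_add_one' δ
    rw [hge] at h
    linear_combination -h
  rw [hsplit_p, hsplit_m, hnum]
  have hrelC : ((Real.sin ((δ + Real.pi)/(2*T)) : ℝ) : ℂ) - ((Real.sin ((δ - Real.pi)/(2*T)) : ℝ) : ℂ)
      = 2 * (Real.cos (δ/(2*T)) : ℂ) * (Real.sin (Real.pi/(2*T)) : ℂ) := by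
    have hr : Real.sin ((δ + Real.pi)/(2*T)) - Real.sin ((δ - Real.pi)/(2*T))
        = 2 * Real.cos (δ/(2*T)) * Real.sin (Real.pi/(2*T)) := by
      rw [Real.sin_sub_sin,
        show ((δ + Real.pi)/(2*(T:ℝ)) - (δ - Real.pi)/(2*(T:ℝ)))/2 = Real.pi/(2*(T:ℝ)) by
          field_simp; ring,
        show ((δ + Real.pi)/(2*(T:ℝ)) + (δ - Real.pi)/(2*(T:ℝ)))/2 = δ/(2*(T:ℝ)) by
          field_simp; ring]
      ring
    exact_mod_cast hr
  exact alg' Complex.I _ _ _ _ _ _ _ _ _ _ _ Complex.I_mul_I Complex.I_ne_zero two_ne_zero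
    (Complex.exp_ne_zero _) (Complex.exp_ne_zero _) (Complex.exp_ne_zero _)
    (Complex.ofReal_ne_zero.mpr h1) (Complex.ofReal_ne_zero.mpr h2) hrelC
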